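/- arXiv:1307.7359 — 3 statements merged into one kernel-verified Lean document; each statement's English description precedes it below -/
import Mathlib

section
/- If Λ ⊂ ℝ is a sampling sequence for B¹_π (that is, there exists C < ∞ with sup_ℝ|F'| ≤ C · sup_k |(F(λ_{k+1})-F(λ_k))/(λ_{k+1}-λ_k)| for all F ∈ B¹_π), then Λ is relatively dense: there exists R > 0 such that Λ ∩ (ξ - R, ξ + R) ≠ ∅ for every ξ ∈ ℝ. -/
open Complex

noncomputable section

/-- `F` is (entire) of exponential type `τ`. -/
def ExpType (τ : ℝ) (F : ℂ → ℂ) : Prop :=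
  ∃ C : ℝ, ∀ z : ℂ, ‖F z‖ ≤ C * Real.exp (τ * ‖z‖)

/-- The space `B¹_τ`: entire functions of exponential type `τ`
with bounded derivative on the real line. -/
def MemB1 (τ : ℝ) (F : ℂ → ℂ) : Prop :=
  Differentiable ℂ F ∧ ExpType τ F ∧ ∃ M : ℝ, ∀ x : ℝ, ‖deriv F x‖ ≤ M

/-- The Bernstein space `B_τ`: entire functions of exponential type `τ`
bounded on the real line. -/
def MemB (τ : ℝ) (F : ℂ → ℂ) : Prop :=
  Differentiable ℂ F ∧ ExpType τ F ∧ ∃ M : ℝ, ∀ x : ℝ, ‖F x‖ ≤ M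

/- Auxiliary development: the test function `sin^2(c(z-ξ))/(c^2(z-ξ))`. -/
namespace Stmt3Aux
open Filter Topology Set

def cc : ℝ := Real.pi / 2
lemma one_le_cc : 1 ≤ cc := by have := Real.pi_gt_three; unfold cc; linarith
lemma cc_pos : 0 < cc := lt_of_lt_of_le one_pos one_le_cc
lemma ccC_ne : ((cc : ℝ) : ℂ) ≠ 0 := by exact_mod_cast cc_pos.ne'
def g : ℂ → ℂ := fun w => Complex.sin ((cc : ℂ) * w) ^ 2 / ((cc : ℂ) ^ 2 * w)
def gD (w : ℂ) : ℂ :=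
  ((2 : ℕ) * Complex.sin ((cc:ℂ)*w) ^ 1 * (Complex.cos ((cc:ℂ)*w) * cc) * ((cc:ℂ)^2 * w)
    - Complex.sin ((cc:ℂ)*w) ^ 2 * (cc:ℂ)^2) / ((cc:ℂ)^2 * w) ^ 2

lemma hasDerivAt_sin_mul (w : ℂ) :
    HasDerivAt (fun z => Complex.sin ((cc:ℂ) * z)) (Complex.cos ((cc:ℂ)*w) * cc) w := by
  have h := (Complex.hasDerivAt_sin ((cc:ℂ)*w)).comp w ((hasDerivAt_id w).const_mul (cc:ℂ))
  simpa [Function.comp_def, mul_one] using h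

lemma g_hasDerivAt {w : ℂ} (hw : w ≠ 0) : HasDerivAt g (gD w) w := by
  have hnum := (hasDerivAt_sin_mul w).pow 2
  have hden : HasDerivAt (fun z : ℂ => (cc:ℂ)^2 * z) ((cc:ℂ)^2) w := by
    simpa using (hasDerivAt_id w).const_mul ((cc:ℂ)^2)
  have hd0 : (cc:ℂ)^2 * w ≠ 0 := mul_ne_zero (pow_ne_zero _ ccC_ne) hw
  have h := hnum.div hden hd0
  exact h

lemma g_hasDerivAt_zero : HasDerivAt g 1 0 := by
  rw [hasDerivAt_iff_tendsto_slope]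
  have hsin : Tendsto (fun u : ℂ => Complex.sin u / u) (𝓝[≠] 0) (𝓝 1) := by
    have h := Complex.hasDerivAt_sin 0
    rw [hasDerivAt_iff_tendsto_slope] at h
    simpa [slope_fun_def_field, Complex.sin_zero, Complex.cos_zero] using h
  have hmul : Tendsto (fun w : ℂ => (cc:ℂ) * w) (𝓝[≠] 0) (𝓝[≠] 0) := by
    rw [tendsto_nhdsWithin_iff]
    constructor
    · have : Tendsto (fun w : ℂ => (cc:ℂ) * w) (𝓝 0) (𝓝 0) := by
        simpa [Pi.mul_def] using (continuous_const.mul continuous_id).tendsto (0 : ℂ)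
      exact this.mono_left nhdsWithin_le_nhds
    · filter_upwards [eventually_mem_nhdsWithin] with w hw
      exact mul_ne_zero ccC_ne hw
  have h1 : Tendsto (fun w : ℂ => Complex.sin ((cc:ℂ)*w) / ((cc:ℂ)*w)) (𝓝[≠] 0) (𝓝 1) :=
    hsin.comp hmul
  have h2 : Tendsto (fun w : ℂ => (Complex.sin ((cc:ℂ)*w) / ((cc:ℂ)*w)) ^ 2) (𝓝[≠] 0) (𝓝 1) := by
    simpa using h1.pow 2
  refine h2.congr' ?_
  filter_upwards [eventually_mem_nhdsWithin] with w hw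
  have hw0 : (w : ℂ) ≠ 0 := hw
  simp only [slope_fun_def_field, g, sub_zero]
  rw [mul_zero, Complex.sin_zero]
  field_simp
  ring

lemma g_diff : Differentiable ℂ g := by
  intro w
  rcases eq_or_ne w 0 with h | h
  · exact h ▸ g_hasDerivAt_zero.differentiableAt
  · exact (g_hasDerivAt h).differentiableAt

lemma abs_sin_le (z : ℂ) : ‖Complex.sin z‖ ≤ Real.exp (‖z‖) := by
  have h1 : ‖Complex.sin z‖
      ≤ (Real.exp z.im + Real.exp (-z.im)) / 2 := by
    rw [Complex.sin, norm_div, norm_mul, Complex.norm_I, Complex.norm_two, mul_one]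
    have htri := norm_sub_le (Complex.exp (-z * Complex.I)) (Complex.exp (z * Complex.I))
    rw [Complex.norm_exp, Complex.norm_exp] at htri
    simp only [Complex.neg_im, Complex.mul_I_re, neg_neg] at htri
    linarith
  refine h1.trans ?_
  have h2 : z.im ≤ ‖z‖ := le_trans (le_abs_self _) (Complex.abs_im_le_norm z)
  have h3 : -z.im ≤ ‖z‖ := le_trans (neg_le_abs _) (Complex.abs_im_le_norm z)
  have := Real.exp_le_exp.2 h2
  have := Real.exp_le_exp.2 h3
  linarith

lemma abs_ccC_mul (w : ℂ) : ‖(cc:ℂ) * w‖ = cc * ‖w‖ := by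
  rw [norm_mul, Complex.norm_real, Real.norm_eq_abs, _root_.abs_of_pos cc_pos]

lemma g_bound_far {w : ℂ} (hw : 1 ≤ ‖w‖) :
    ‖g w‖ ≤ Real.exp (Real.pi * ‖w‖) := by
  have hnum : ‖Complex.sin ((cc:ℂ)*w) ^ 2‖ ≤ Real.exp (Real.pi * ‖w‖) := by
    rw [norm_pow]
    calc ‖Complex.sin ((cc:ℂ)*w)‖ ^ 2
        ≤ Real.exp (‖(cc:ℂ)*w‖) ^ 2 :=
          pow_le_pow_left₀ (norm_nonneg _) (abs_sin_le _) 2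
      _ = Real.exp (Real.pi * ‖w‖) := by
          rw [abs_ccC_mul, sq, ← Real.exp_add]
          congr 1
          unfold cc; ring
  have hden : 1 ≤ ‖(cc:ℂ)^2 * w‖ := by
    rw [norm_mul, norm_pow, Complex.norm_real, Real.norm_eq_abs, _root_.abs_of_pos cc_pos]
    calc (1:ℝ) = 1 * 1 := (one_mul 1).symm
      _ ≤ cc^2 * ‖w‖ := by
          apply mul_le_mul _ hw one_pos.le (by nlinarith [one_le_cc])
          nlinarith [one_le_cc]
  calc ‖g w‖ = ‖Complex.sin ((cc:ℂ)*w) ^ 2‖ / ‖(cc:ℂ)^2 * w‖ := by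
        rw [g, norm_div]
    _ ≤ ‖Complex.sin ((cc:ℂ)*w) ^ 2‖ / 1 := by
        gcongr
    _ ≤ Real.exp (Real.pi * ‖w‖) := by rw [div_one]; exact hnum

lemma g_real_cast (t : ℝ) : g (t:ℂ) = ((Real.sin (cc*t) ^ 2 / (cc^2 * t) : ℝ) : ℂ) := by
  unfold g; push_cast; ring_nf

lemma abs_g_real {t : ℝ} (ht : t ≠ 0) : ‖g (t:ℂ)‖ ≤ 1 / |t| := by
  rw [g_real_cast, Complex.norm_real, Real.norm_eq_abs, _root_.abs_div]
  apply div_le_div₀ (by norm_num) _ (abs_pos.mpr ht) _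
  · rw [_root_.abs_of_nonneg (sq_nonneg _)]
    exact Real.sin_sq_le_one _
  · rw [_root_.abs_mul, _root_.abs_of_nonneg (sq_nonneg cc)]
    have h := mul_le_mul_of_nonneg_right (by nlinarith [one_le_cc] : (1:ℝ) ≤ cc^2) (abs_nonneg t)
    linarith

lemma gD_real_cast (t : ℝ) : gD (t:ℂ) =
    (((2 * Real.sin (cc*t) ^ 1 * (Real.cos (cc*t) * cc) * (cc^2*t)
      - Real.sin (cc*t)^2 * cc^2) / (cc^2*t)^2 : ℝ) : ℂ) := by
  unfold gD; push_cast; ring_nf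

lemma abs_gD_real {t : ℝ} (ht : t ≠ 0) :
    ‖gD (t:ℂ)‖ ≤ 2 / |t| + 1 / t ^ 2 := by
  rw [gD_real_cast, Complex.norm_real, Real.norm_eq_abs, _root_.abs_div]
  have ht2 : (0:ℝ) < t^2 := by positivity
  have htabs : (0:ℝ) < |t| := abs_pos.mpr ht
  have hcc := one_le_cc
  have hccp := cc_pos
  have hden : |((cc^2*t)^2 : ℝ)| = cc^4 * t^2 := by
    rw [_root_.abs_of_nonneg (sq_nonneg _)]; ring
  rw [hden, div_le_iff₀ (mul_pos (pow_pos hccp 4) ht2)]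
  have hs := Real.abs_sin_le_one (cc*t)
  have hc := Real.abs_cos_le_one (cc*t)
  set s1 := Real.sin (cc*t)
  set c1 := Real.cos (cc*t)
  have h1 : |2 * s1 ^ 1 * (c1 * cc) * (cc^2*t) - s1^2 * cc^2| ≤ 2*cc^3*|t| + cc^2 := by
    refine (abs_sub _ _).trans ?_
    have e1 : |2 * s1 ^ 1 * (c1 * cc) * (cc^2*t)| = (|s1| * |c1|) * (2 * (cc^3 * |t|)) := by
      rw [_root_.abs_mul, _root_.abs_mul, _root_.abs_mul, _root_.abs_mul, _root_.abs_pow,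
        _root_.abs_mul, _root_.abs_of_pos hccp, _root_.abs_of_nonneg (sq_nonneg cc)]
      norm_num; ring
    have e2 : |s1 ^ 2 * cc^2| = |s1|^2 * cc^2 := by
      rw [_root_.abs_mul, _root_.abs_pow, _root_.abs_of_nonneg (sq_nonneg cc)]
    have b1 : (|s1| * |c1|) * (2 * (cc^3 * |t|)) ≤ 1 * (2 * (cc^3 * |t|)) := by
      apply mul_le_mul_of_nonneg_right
      · exact mul_le_one₀ hs (abs_nonneg _) hc
      · have : (0:ℝ) ≤ cc^3 := by positivity
        nlinarith [abs_nonneg t]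
    have b2 : |s1|^2 * cc^2 ≤ 1 * cc^2 := by
      apply mul_le_mul_of_nonneg_right _ (sq_nonneg cc)
      calc |s1|^2 ≤ 1^2 := pow_le_pow_left₀ (abs_nonneg _) hs 2
        _ = 1 := one_pow 2
    rw [e1, e2]
    nlinarith
  refine h1.trans ?_
  have hexp : (2 / |t| + 1 / t ^ 2) * (cc ^ 4 * t ^ 2) = 2*cc^4*|t| + cc^4 := by
    have h := _root_.sq_abs t
    field_simp
    rw [← h]
    ring
  rw [hexp]
  have k1 : cc^3 ≤ cc^4 := by nlinarith [pow_pos hccp 3, pow_pos hccp 2]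
  have k2 : cc^2 ≤ cc^4 := by nlinarith [pow_pos hccp 2]
  nlinarith [abs_nonneg t]

lemma ofReal_sub_ofReal (x y : ℝ) : ((x:ℂ) - (y:ℂ)) = ((x - y : ℝ) : ℂ) := by push_cast; ring

lemma abs_gD_far {t : ℝ} {R : ℝ} (hR : 1 ≤ R) (ht : R ≤ |t|) :
    ‖gD (t:ℂ)‖ ≤ 3 / R := by
  have hRp : (0:ℝ) < R := lt_of_lt_of_le one_pos hR
  have htp : (0:ℝ) < |t| := lt_of_lt_of_le hRp ht
  have ht0 : t ≠ 0 := by intro h; rw [h, abs_zero] at htp; exact lt_irrefl _ htp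
  refine (abs_gD_real ht0).trans ?_
  have h1 : 2 / |t| ≤ 2 / R := by gcongr
  have h2 : 1 / t^2 ≤ 1 / R := by
    apply one_div_le_one_div_of_le hRp
    have : |t|^2 = t^2 := _root_.sq_abs t
    nlinarith
  have : 2 / R + 1 / R = 3 / R := by ring
  linarith

/-- The mean value estimate on an interval staying far from the singularity. -/
lemma key_mvt {a b ξ R : ℝ} (hR : 1 ≤ R) (hab : a ≤ b)
    (h : ∀ x ∈ Set.Icc a b, R ≤ |x - ξ|) :
    ‖g ((b:ℂ) - ξ) - g ((a:ℂ) - ξ)‖ ≤ 3 / R * (b - a) := by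
  have hRp : (0:ℝ) < R := lt_of_lt_of_le one_pos hR
  have hf : ∀ x ∈ Set.Icc a b, HasDerivWithinAt (fun y : ℝ => g ((y:ℂ) - ξ))
      (gD ((x:ℂ) - ξ)) (Set.Icc a b) x := by
    intro x hx
    have hxne : ((x:ℂ) - ξ) ≠ 0 := by
      rw [ofReal_sub_ofReal, Complex.ofReal_ne_zero]
      intro h0
      have := h x hx
      rw [h0, abs_zero] at this
      linarith
    have h1 := (g_hasDerivAt hxne).comp (x:ℂ) ((hasDerivAt_id ((x:ℂ))).sub_const (ξ:ℂ))
    have h2 : HasDerivAt (fun z : ℂ => g (z - ξ)) (gD ((x:ℂ) - ξ)) (x:ℂ) := by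
      simpa [Function.comp_def, mul_one] using h1
    exact h2.comp_ofReal.hasDerivWithinAt
  have hbound : ∀ x ∈ Set.Ico a b, ‖gD ((x:ℂ) - ξ)‖ ≤ 3 / R := by
    intro x hx
    rw [ofReal_sub_ofReal]
    exact abs_gD_far hR (h x (Set.Ico_subset_Icc_self hx))
  have := norm_image_sub_le_of_norm_deriv_le_segment' hf hbound b (Set.right_mem_Icc.2 hab)
  exact this

/-- Membership of the translated test function in `B¹_π`. -/
lemma memB1_shift (ξ : ℝ) : MemB1 Real.pi (fun z : ℂ => g (z - (ξ:ℂ))) := by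
  refine ⟨g_diff.comp (differentiable_id.sub_const _), ?_, ?_⟩
  · -- exponential type
    obtain ⟨K, hK⟩ := (isCompact_closedBall (0:ℂ) 1).exists_bound_of_continuousOn
      g_diff.continuous.continuousOn
    refine ⟨max K 1 * Real.exp (Real.pi * ‖(ξ:ℂ)‖), fun z => ?_⟩
    have hexp1 : (1:ℝ) ≤ Real.exp (Real.pi * ‖(ξ:ℂ)‖) := by
      rw [← Real.exp_zero]
      apply Real.exp_le_exp.2
      positivity
    have hexpz : (1:ℝ) ≤ Real.exp (Real.pi * ‖z‖) := by
      rw [← Real.exp_zero]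
      apply Real.exp_le_exp.2
      positivity
    rcases le_or_gt (‖z - ξ‖) 1 with h | h
    · have hm : z - (ξ:ℂ) ∈ Metric.closedBall (0:ℂ) 1 := by
        rwa [Metric.mem_closedBall, dist_zero_right]
      have := hK _ hm
      calc ‖g (z - ξ)‖ ≤ K := this
        _ ≤ max K 1 := le_max_left _ _
        _ = max K 1 * 1 * 1 := by ring
        _ ≤ max K 1 * Real.exp (Real.pi * ‖(ξ:ℂ)‖) * Real.exp (Real.pi * ‖z‖) := by
            have h01 : (0:ℝ) ≤ max K 1 := le_trans zero_le_one (le_max_right _ _)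
            apply mul_le_mul _ hexpz zero_le_one (by positivity)
            exact mul_le_mul (le_refl _) hexp1 zero_le_one h01
        _ = max K 1 * Real.exp (Real.pi * ‖(ξ:ℂ)‖) * Real.exp (Real.pi * ‖z‖) := rfl
    · have hb := g_bound_far h.le
      have habs : ‖z - ξ‖ ≤ ‖z‖ + ‖(ξ:ℂ)‖ := by
        have := norm_sub_le z (ξ:ℂ)
        exact this
      calc ‖g (z - ξ)‖ ≤ Real.exp (Real.pi * ‖z - ξ‖) := hb
        _ ≤ Real.exp (Real.pi * (‖z‖ + ‖(ξ:ℂ)‖)) := by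
            apply Real.exp_le_exp.2
            apply mul_le_mul_of_nonneg_left habs Real.pi_pos.le
        _ = Real.exp (Real.pi * ‖(ξ:ℂ)‖) * Real.exp (Real.pi * ‖z‖) := by
            rw [← Real.exp_add]; ring_nf
        _ ≤ max K 1 * Real.exp (Real.pi * ‖(ξ:ℂ)‖) * Real.exp (Real.pi * ‖z‖) := by
            have h1 : (1:ℝ) ≤ max K 1 := le_max_right _ _
            have hpos := mul_pos (Real.exp_pos (Real.pi * ‖(ξ:ℂ)‖))
              (Real.exp_pos (Real.pi * ‖z‖))
            nlinarith [mul_le_mul_of_nonneg_right h1 hpos.le]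
  · -- bounded derivative on the real line
    have hcont : Continuous (deriv g) := (g_diff.contDiff (n := 1)).continuous_deriv le_rfl
    obtain ⟨K, hK⟩ := (isCompact_closedBall (0:ℂ) 1).exists_bound_of_continuousOn
      hcont.continuousOn
    refine ⟨max K 3, fun x => ?_⟩
    have hd : deriv (fun z : ℂ => g (z - (ξ:ℂ))) (x:ℝ) = deriv g ((x:ℂ) - ξ) :=
      deriv_comp_sub_const g (ξ:ℂ) (x:ℂ)
    rw [hd]
    rcases le_or_gt (‖(x:ℂ) - ξ‖) 1 with h | h
    · have hm : (x:ℂ) - ξ ∈ Metric.closedBall (0:ℂ) 1 := by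
        rwa [Metric.mem_closedBall, dist_zero_right]
      have := hK _ hm
      exact this.trans (le_max_left _ _)
    · have hxe : ((x:ℂ) - ξ) = ((x - ξ : ℝ) : ℂ) := ofReal_sub_ofReal x ξ
      rw [hxe] at h ⊢
      rw [Complex.norm_real, Real.norm_eq_abs] at h
      have hne : (x - ξ : ℝ) ≠ 0 := by
        intro h0; rw [h0, abs_zero] at h; linarith
      have hder := (g_hasDerivAt (w := ((x - ξ:ℝ):ℂ)) (by exact_mod_cast hne)).deriv
      rw [hder]
      have := abs_gD_far (le_refl 1) h.le
      rw [div_one] at this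
      exact this.trans (le_max_right _ _)

end Stmt3Aux

/-- a sampling sequence for `B¹_π` is relatively dense. -/
theorem stmt_3 (lam : ℤ → ℝ) (hmono : StrictMono lam)
    (hsamp : ∃ C : ℝ, ∀ F : ℂ → ℂ, MemB1 Real.pi F → ∀ B : ℝ,
      (∀ k : ℤ, ‖(F (lam (k + 1)) - F (lam k)) /
          ((lam (k + 1) : ℂ) - (lam k : ℂ))‖ ≤ B) →
      ∀ x : ℝ, ‖deriv F x‖ ≤ C * B) :
    ∃ R > 0, ∀ ξ : ℝ, ∃ k : ℤ, lam k ∈ Set.Ioo (ξ - R) (ξ + R) := by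
  obtain ⟨C, hC⟩ := hsamp
  have hlt : ∀ k : ℤ, lam k < lam (k + 1) := fun k => hmono (lt_add_one k)
  have hden_ne : ∀ k : ℤ, ((lam (k+1) : ℂ) - (lam k : ℂ)) ≠ 0 := by
    intro k
    rw [Stmt3Aux.ofReal_sub_ofReal, Complex.ofReal_ne_zero]
    exact sub_ne_zero.mpr (hlt k).ne'
  -- First, `C ≥ 1`, using the identity function.
  have hC1 : 1 ≤ C := by
    have hid : MemB1 Real.pi (fun z : ℂ => z) := by
      refine ⟨differentiable_id, ⟨1, fun z => ?_⟩, ⟨1, fun x => ?_⟩⟩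
      · rw [one_mul]
        have h1 : ‖z‖ ≤ Real.exp (‖z‖) := by
          have := Real.add_one_le_exp (‖z‖)
          linarith
        refine h1.trans (Real.exp_le_exp.2 ?_)
        have hp : (1:ℝ) ≤ Real.pi := by have := Real.pi_gt_three; linarith
        nlinarith [norm_nonneg z]
      · rw [deriv_id'']
        simp
    have h := hC (fun z : ℂ => z) hid 1 (fun k => by
      rw [div_self (hden_ne k)]
      simp) 0
    simpa using h
  have hCpos : (0:ℝ) < C := lt_of_lt_of_le one_pos hC1
  refine ⟨4 * C, by linarith, ?_⟩
  intro ξ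
  by_contra hcon
  push_neg at hcon
  set R : ℝ := 4 * C with hRdef
  have hR1 : (1:ℝ) ≤ R := by simp only [hRdef]; linarith
  have hRp : (0:ℝ) < R := lt_of_lt_of_le one_pos hR1
  have hfar : ∀ k : ℤ, R ≤ |lam k - ξ| := by
    intro k
    have h := hcon k
    rw [Set.mem_Ioo] at h
    push_neg at h
    rcases lt_or_ge (ξ - R) (lam k) with h1 | h1
    · have h2 := h h1
      rw [_root_.abs_of_nonneg (by linarith)]
      linarith
    · rw [abs_sub_comm, _root_.abs_of_nonneg (by linarith)]
      linarith
  set F : ℂ → ℂ := fun z => Stmt3Aux.g (z - (ξ:ℝ)) with hFdef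
  have hq : ∀ k : ℤ, ‖(F (lam (k + 1)) - F (lam k)) /
      ((lam (k + 1) : ℂ) - (lam k : ℂ))‖ ≤ 3 / R := by
    intro k
    set a : ℝ := lam k
    set b : ℝ := lam (k + 1)
    have hab : a < b := hlt k
    have hfa : R ≤ |a - ξ| := hfar k
    have hfb : R ≤ |b - ξ| := hfar (k + 1)
    rw [norm_div, Stmt3Aux.ofReal_sub_ofReal, Complex.norm_real, Real.norm_eq_abs,
      _root_.abs_of_pos (by linarith : (0:ℝ) < b - a), div_le_iff₀ (by linarith : (0:ℝ) < b - a)]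
    rcases le_or_gt ξ a with hcase | hcase
    · -- interval to the right of ξ
      have h := Stmt3Aux.key_mvt (ξ := ξ) hR1 hab.le (fun x hx => by
        rw [_root_.abs_of_nonneg (by cases hx; linarith)]
        rw [_root_.abs_of_nonneg (by linarith)] at hfa
        cases hx; linarith)
      exact h
    rcases le_or_gt b ξ with hcase2 | hcase2
    · -- interval to the left of ξ
      have h := Stmt3Aux.key_mvt (ξ := ξ) hR1 hab.le (fun x hx => by
        rw [abs_sub_comm, _root_.abs_of_nonneg (by cases hx; linarith)]
        rw [abs_sub_comm, _root_.abs_of_nonneg (by linarith)] at hfb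
        cases hx; linarith)
      exact h
    · -- interval straddles ξ
      have ha' : a ≤ ξ - R := by
        rw [abs_sub_comm, _root_.abs_of_nonneg (by linarith)] at hfa
        linarith
      have hb' : ξ + R ≤ b := by
        rw [_root_.abs_of_nonneg (by linarith)] at hfb
        linarith
      have hga : ‖F (a:ℝ)‖ ≤ 1 / R := by
        have hcast : ((a:ℝ):ℂ) - (ξ:ℝ) = ((a - ξ : ℝ) : ℂ) := Stmt3Aux.ofReal_sub_ofReal a ξ
        have hne : (a - ξ : ℝ) ≠ 0 := by intro h0; rw [h0, abs_zero] at hfa; linarith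
        calc ‖F (a:ℝ)‖ = ‖Stmt3Aux.g ((a - ξ : ℝ):ℂ)‖ := by
              rw [hFdef]; simp only; rw [hcast]
          _ ≤ 1 / |a - ξ| := Stmt3Aux.abs_g_real hne
          _ ≤ 1 / R := by gcongr
      have hgb : ‖F (b:ℝ)‖ ≤ 1 / R := by
        have hcast : ((b:ℝ):ℂ) - (ξ:ℝ) = ((b - ξ : ℝ) : ℂ) := Stmt3Aux.ofReal_sub_ofReal b ξ
        have hne : (b - ξ : ℝ) ≠ 0 := by intro h0; rw [h0, abs_zero] at hfb; linarith
        calc ‖F (b:ℝ)‖ = ‖Stmt3Aux.g ((b - ξ : ℝ):ℂ)‖ := by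
              rw [hFdef]; simp only; rw [hcast]
          _ ≤ 1 / |b - ξ| := Stmt3Aux.abs_g_real hne
          _ ≤ 1 / R := by gcongr
      have htri : ‖F (b:ℝ) - F (a:ℝ)‖ ≤ 2 / R := by
        have := norm_sub_le (F (b:ℝ)) (F (a:ℝ))
        calc ‖F (b:ℝ) - F (a:ℝ)‖ ≤ ‖F (b:ℝ)‖ + ‖F (a:ℝ)‖ := this
          _ ≤ 1 / R + 1 / R := add_le_add hgb hga
          _ = 2 / R := by ring
      have h2R : 2 * R ≤ b - a := by linarith
      have hfin : 2 / R ≤ 3 / R * (b - a) := by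
        have e1 : 3 / R * (2 * R) = 6 := by field_simp; ring
        have e2 : 3 / R * (2 * R) ≤ 3 / R * (b - a) := by
          apply mul_le_mul_of_nonneg_left h2R (by positivity)
        have e3 : 2 / R ≤ 2 := by
          rw [div_le_iff₀ hRp]; nlinarith
        linarith
      exact htri.trans hfin
  have hmem : MemB1 Real.pi F := Stmt3Aux.memB1_shift ξ
  have h1 := hC F hmem (3 / R) hq ξ
  have hdF : deriv F ((ξ:ℝ):ℂ) = 1 := by
    have hd := deriv_comp_sub_const Stmt3Aux.g ((ξ:ℝ):ℂ) ((ξ:ℝ):ℂ)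
    rw [sub_self] at hd
    simp only [hFdef]
    rw [hd, Stmt3Aux.g_hasDerivAt_zero.deriv]
  rw [hdF] at h1
  simp only [norm_one] at h1
  have : C * (3 / R) = 3 / 4 := by
    rw [hRdef]
    field_simp
  rw [this] at h1
  linarith
end
end

section
/- If a separated sequence Λ ⊂ ℝ is sampling for B¹_π, then Λ is sampling for the Bernstein space B_π; that is, there exists a constant C such that every F ∈ B_π with sup_{λ∈Λ}|F(λ)| ≤ 1 satisfies sup_ℝ|F| ≤ C. -/
open Complex

noncomputable section

lemma absSinLe (w : ℂ) : ‖Complex.sin w‖ ≤ Real.exp |w.im| := by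
  rw [Complex.sin]
  have h1 : ‖Complex.exp (-w * I)‖ = Real.exp (w.im) := by
    rw [Complex.norm_exp]; congr 1; simp
  have h2 : ‖Complex.exp (w * I)‖ = Real.exp (-w.im) := by
    rw [Complex.norm_exp]; congr 1; simp
  have := norm_sub_le (Complex.exp (-w * I)) (Complex.exp (w * I))
  calc ‖(Complex.exp (-w * I) - Complex.exp (w * I)) * I / 2‖
      = ‖Complex.exp (-w * I) - Complex.exp (w * I)‖ / 2 := by
        simp [norm_div, norm_mul]
    _ ≤ (Real.exp w.im + Real.exp (-w.im)) / 2 := by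
        rw [← h1, ← h2]; linarith [norm_sub_le (Complex.exp (-w * I)) (Complex.exp (w * I))]
    _ ≤ Real.exp |w.im| := by
        have a1 : Real.exp w.im ≤ Real.exp |w.im| := Real.exp_le_exp.2 (le_abs_self _)
        have a2 : Real.exp (-w.im) ≤ Real.exp |w.im| := Real.exp_le_exp.2 (neg_le_abs _)
        linarith

lemma absCosLe (w : ℂ) : ‖Complex.cos w‖ ≤ Real.exp |w.im| := by
  rw [Complex.cos]
  have h1 : ‖Complex.exp (w * I)‖ = Real.exp (-w.im) := by
    rw [Complex.norm_exp]; congr 1; simp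
  have h2 : ‖Complex.exp (-w * I)‖ = Real.exp (w.im) := by
    rw [Complex.norm_exp]; congr 1; simp
  calc ‖(Complex.exp (w * I) + Complex.exp (-w * I)) / 2‖
      ≤ (‖Complex.exp (w * I)‖ + ‖Complex.exp (-w * I)‖) / 2 := by
        rw [norm_div]; simp only [Complex.norm_ofNat]
        gcongr; exact norm_add_le _ _
    _ ≤ Real.exp |w.im| := by
        rw [h1, h2]
        have a1 : Real.exp w.im ≤ Real.exp |w.im| := Real.exp_le_exp.2 (le_abs_self _)
        have a2 : Real.exp (-w.im) ≤ Real.exp |w.im| := Real.exp_le_exp.2 (neg_le_abs _)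
        linarith

lemma absSinLe' (w : ℂ) : ‖Complex.sin w‖ ≤ ‖w‖ * Real.exp |w.im| := by
  have key : ∀ x ∈ Set.Icc (0:ℝ) 1,
      HasDerivWithinAt (fun t : ℝ => Complex.sin (t * w))
        (w * Complex.cos (x * w)) (Set.Icc 0 1) x := by
    intro x _
    have h1 : HasDerivAt (fun t : ℝ => ((t : ℂ)) * w) w x := by
      simpa using (((hasDerivAt_id ((x:ℝ):ℂ)).mul_const w).comp_ofReal)
    have h2 : HasDerivAt Complex.sin (Complex.cos ((x:ℂ) * w)) ((x:ℂ) * w) :=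
      Complex.hasDerivAt_sin _
    have := (h2.comp x h1)
    simpa [mul_comm, Function.comp_def] using this.hasDerivWithinAt
  have bound : ∀ x ∈ Set.Ico (0:ℝ) 1,
      ‖w * Complex.cos (x * w)‖ ≤ ‖w‖ * Real.exp |w.im| := by
    intro x hx
    rw [norm_mul]
    have hb : ‖Complex.cos (x * w)‖ ≤ Real.exp |w.im| := by
      refine (absCosLe _).trans (Real.exp_le_exp.2 ?_)
      have him : ((x:ℂ) * w).im = x * w.im := by simp
      rw [him, abs_mul, _root_.abs_of_nonneg hx.1]
      nlinarith [abs_nonneg w.im, hx.1, hx.2.le]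
    exact mul_le_mul_of_nonneg_left hb (norm_nonneg _)
  have := norm_image_sub_le_of_norm_deriv_le_segment' key bound 1 (by norm_num)
  simpa using this

/-- Entire extension of `(sin w / w)^2`. -/
def sinc2 (w : ℂ) : ℂ := if w = 0 then 1 else (Complex.sin w / w) ^ 2

lemma sinc2_diff : Differentiable ℂ sinc2 := by
  have hcont : ContinuousAt sinc2 0 := by
    have hslope : Filter.Tendsto (slope Complex.sin 0) (nhdsWithin 0 {(0:ℂ)}ᶜ) (nhds 1) := by
      have := (Complex.hasDerivAt_sin 0)
      rw [Complex.cos_zero] at this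
      exact hasDerivAt_iff_tendsto_slope.1 this
    have hslope2 : Filter.Tendsto (fun w => (slope Complex.sin 0 w)^2)
        (nhdsWithin 0 {(0:ℂ)}ᶜ) (nhds 1) := by
      simpa using hslope.pow 2
    have heq : ∀ w ∈ ({(0:ℂ)}ᶜ : Set ℂ), (slope Complex.sin 0 w)^2 = sinc2 w := by
      intro w hw
      have hw0 : w ≠ 0 := hw
      simp [slope, sinc2, hw0, div_eq_inv_mul]
    have h2 : Filter.Tendsto sinc2 (nhdsWithin 0 {(0:ℂ)}ᶜ) (nhds 1) := by
      refine hslope2.congr' ?_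
      filter_upwards [self_mem_nhdsWithin] with w hw using heq w hw
    rw [ContinuousAt]
    have h0 : sinc2 0 = 1 := by simp [sinc2]
    rw [h0, ← nhdsNE_sup_pure 0]
    rw [Filter.tendsto_sup]
    exact ⟨h2, h0 ▸ tendsto_pure_nhds sinc2 0⟩
  have hoff : DifferentiableOn ℂ sinc2 ((Set.univ : Set ℂ) \ {0}) := by
    intro w hw
    have hw0 : w ≠ 0 := hw.2
    have : DifferentiableAt ℂ (fun z => (Complex.sin z / z)^2) w :=
      ((Complex.differentiable_sin w).div (differentiableAt_id) hw0).pow 2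
    refine (this.congr_of_eventuallyEq ?_).differentiableWithinAt
    filter_upwards [isOpen_compl_singleton.mem_nhds hw0] with z hz
    rw [sinc2, if_neg (show z ≠ 0 from hz)]
  have := (Complex.differentiableOn_compl_singleton_and_continuousAt_iff
    (Filter.univ_mem : Set.univ ∈ nhds (0:ℂ))).1 ⟨hoff, hcont⟩
  rw [← differentiableOn_univ]; exact this

lemma sinc2_bound (w : ℂ) : ‖sinc2 w‖ ≤ Real.exp (2 * |w.im|) := by
  rcases eq_or_ne w 0 with rfl | hw
  · rw [sinc2, if_pos rfl]
    simpa using Real.one_le_exp (by positivity : (0:ℝ) ≤ 2 * |(0:ℂ).im|)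
  · rw [sinc2, if_neg hw, norm_pow, norm_div]
    have h1 : ‖Complex.sin w‖ / ‖w‖ ≤ Real.exp |w.im| := by
      rw [div_le_iff₀ (by simpa [norm_pos_iff] using hw : (0:ℝ) < ‖w‖)]
      calc ‖Complex.sin w‖ ≤ ‖w‖ * Real.exp |w.im| := absSinLe' w
        _ = Real.exp |w.im| * ‖w‖ := by ring
    calc (‖Complex.sin w‖ / ‖w‖)^2 ≤ (Real.exp |w.im|)^2 := by
          have := div_nonneg (norm_nonneg (Complex.sin w)) (norm_nonneg w)
          nlinarith
      _ = Real.exp (2 * |w.im|) := by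
          rw [sq, ← Real.exp_add]; ring_nf

lemma sinc2_real_decay (x : ℝ) (hx : 1 ≤ |x|) :
    ‖sinc2 x‖ ≤ 1 / x ^ 2 := by
  have hx0 : (x:ℂ) ≠ 0 := by
    simp only [ne_eq, ofReal_eq_zero]
    intro h; rw [h] at hx; simp at hx; linarith
  rw [sinc2, if_neg hx0, norm_pow, norm_div]
  have hs : ‖Complex.sin x‖ ≤ 1 := by
    rw [← Complex.ofReal_sin, Complex.norm_real, Real.norm_eq_abs]
    exact abs_le.2 ⟨Real.neg_one_le_sin x, Real.sin_le_one x⟩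
  have ha : ‖(x:ℂ)‖ = |x| := by rw [Complex.norm_real, Real.norm_eq_abs]
  rw [ha]
  have hxpos : (0:ℝ) < |x| := lt_of_lt_of_le one_pos hx
  calc (‖Complex.sin ↑x‖ / |x|)^2 ≤ (1/|x|)^2 := by
        have h1 : ‖Complex.sin ↑x‖ / |x| ≤ 1 / |x| := by gcongr
        have := div_nonneg (norm_nonneg (Complex.sin (x:ℂ))) (abs_nonneg x)
        nlinarith
    _ = 1 / x^2 := by rw [div_pow, one_pow, _root_.sq_abs]

lemma sinc2_zero : sinc2 0 = 1 := by simp [sinc2]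

/-- Cauchy estimate on the strip. -/
lemma deriv_bound_of_strip {F : ℂ → ℂ} (hF : Differentiable ℂ F) {K : ℝ}
    (hK : ∀ z : ℂ, ‖F z‖ ≤ K * Real.exp (Real.pi * |z.im|)) (x : ℝ) :
    ‖deriv F x‖ ≤ K * Real.exp Real.pi := by
  have hK0 : 0 ≤ K := by
    have := hK 0
    simp at this
    exact le_trans (norm_nonneg _) this
  have := Complex.norm_deriv_le_of_forall_mem_sphere_norm_le (c := (x:ℂ))
    (R := 1) (C := K * Real.exp Real.pi) one_pos hF.diffContOnCl ?_
  · simpa using this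
  · intro z hz
    refine (hK z).trans ?_
    have habs : ‖z - x‖ = 1 := by
      simpa [Complex.dist_eq] using mem_sphere_iff_norm.1 hz
    have him : |z.im| ≤ 1 := by
      have h1 : |(z - x).im| ≤ ‖z - x‖ := Complex.abs_im_le_norm _
      simpa [habs] using h1
    have : Real.pi * |z.im| ≤ Real.pi := by
      nlinarith [Real.pi_nonneg, abs_nonneg z.im]
    exact mul_le_mul_of_nonneg_left (Real.exp_le_exp.2 this) hK0

/-- Mean value inequality along the real axis. -/
lemma mvt_real {F : ℂ → ℂ} (hF : Differentiable ℂ F) {m : ℝ}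
    (hm : ∀ x : ℝ, ‖deriv F x‖ ≤ m) (s t : ℝ) (hst : s ≤ t) :
    ‖F t - F s‖ ≤ m * (t - s) := by
  have key : ∀ x ∈ Set.Icc s t,
      HasDerivWithinAt (fun u : ℝ => F u) (deriv F x) (Set.Icc s t) x := by
    intro x _
    exact ((hF _).hasDerivAt.comp_ofReal).hasDerivWithinAt
  have bound : ∀ x ∈ Set.Ico s t, ‖deriv F x‖ ≤ m := fun x _ => hm x
  have := norm_image_sub_le_of_norm_deriv_le_segment' key bound t (Set.right_mem_Icc.2 hst)
  simpa using this

/-- Phragmén–Lindelöf: exponential type π + bounded on ℝ ⇒ exp(π|Im z|) bound. -/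
lemma strip_bound {F : ℂ → ℂ} (hd : Differentiable ℂ F) {Ce M : ℝ}
    (hty : ∀ z : ℂ, ‖F z‖ ≤ Ce * Real.exp (Real.pi * ‖z‖))
    (hM : ∀ x : ℝ, ‖F x‖ ≤ M) :
    ∀ z : ℂ, ‖F z‖ ≤ max M Ce * Real.exp (Real.pi * |z.im|) := by
  set K := max M Ce with hK
  have hMK : M ≤ K := le_max_left _ _
  have hCK : Ce ≤ K := le_max_right _ _
  -- the two auxiliary functions
  have main : ∀ (ε : ℂ), ‖ε‖ = 1 →
      ∀ z : ℂ, 0 ≤ (ε * z).im → ‖F z * Complex.exp (Real.pi * I * ε * z)‖ ≤ K → True := by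
    intro _ _ _ _ _; trivial
  -- G₊ bound on upper half plane
  have upper : ∀ z : ℂ, 0 ≤ z.im →
      ‖F z * Complex.exp (Real.pi * I * z)‖ ≤ K := by
    intro z hz
    set G : ℂ → ℂ := fun w => F w * Complex.exp (Real.pi * I * w) with hG
    have hGd : Differentiable ℂ G := hd.mul (by fun_prop)
    have hB : ∀ (s : Set ℂ), ∃ c < (2:ℝ), ∃ B, G =O[Bornology.cobounded ℂ ⊓ Filter.principal s]
        fun z => Real.exp (B * ‖z‖ ^ c) := by
      intro s
      refine ⟨1, one_lt_two, 2 * Real.pi, ?_⟩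
      refine Asymptotics.IsBigO.of_bound (max Ce 1) ?_
      filter_upwards with w
      show ‖F w * Complex.exp (Real.pi * I * w)‖ ≤ _
      rw [norm_mul]
      have h1 : ‖Complex.exp (Real.pi * I * w)‖ ≤ Real.exp (Real.pi * ‖w‖) := by
        rw [Complex.norm_exp]
        refine Real.exp_le_exp.2 ?_
        have : (Real.pi * I * w).re = -Real.pi * w.im := by simp
        rw [this]
        nlinarith [Complex.abs_im_le_norm w, neg_abs_le w.im, Real.pi_nonneg,
          abs_nonneg w.im, neg_le_abs w.im]
      have h2 := hty w
      have hexp : Real.exp (2 * Real.pi * ‖w‖ ^ (1:ℝ)) =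
          Real.exp (Real.pi * ‖w‖) * Real.exp (Real.pi * ‖w‖) := by
        rw [← Real.exp_add, Real.rpow_one]; ring_nf
      have habs : |Real.exp (2 * Real.pi * ‖w‖ ^ (1:ℝ))| =
          Real.exp (2 * Real.pi * ‖w‖ ^ (1:ℝ)) := abs_of_pos (Real.exp_pos _)
      rw [Real.norm_eq_abs, habs, hexp]
      have hCe1 : Ce ≤ max Ce 1 := le_max_left _ _
      have e1 : (0:ℝ) < Real.exp (Real.pi * ‖w‖) := Real.exp_pos _
      nlinarith [norm_nonneg (F w), norm_nonneg (Complex.exp (Real.pi * I * w)),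
        mul_le_mul h2 h1 (norm_nonneg _) (le_trans (norm_nonneg _) h2)]
    have hre : ∀ x : ℝ, ‖G x‖ ≤ K := by
      intro x
      rw [hG]
      simp only
      rw [norm_mul, Complex.norm_exp]
      have : (↑Real.pi * I * ↑x).re = 0 := by simp
      rw [this, Real.exp_zero, mul_one]
      exact le_trans (hM x) hMK
    have him : ∀ x : ℝ, 0 ≤ x → ‖G (x * I)‖ ≤ K := by
      intro x hx
      rw [hG]; simp only
      rw [norm_mul, Complex.norm_exp]
      have hre' : (↑Real.pi * I * (↑x * I)).re = -(Real.pi * x) := by simp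
      rw [hre']
      have h2 := hty (x * I)
      have habs : ‖(x:ℂ) * I‖ = x := by
        rw [norm_mul, Complex.norm_I, mul_one, Complex.norm_real, Real.norm_eq_abs, _root_.abs_of_nonneg hx]
      rw [habs] at h2
      calc ‖F (↑x * I)‖ * Real.exp (-(Real.pi * x))
          ≤ (Ce * Real.exp (Real.pi * x)) * Real.exp (-(Real.pi * x)) := by
            have := Real.exp_pos (-(Real.pi * x)); nlinarith [norm_nonneg (F ((x:ℂ) * I))]
        _ = Ce := by rw [mul_assoc, ← Real.exp_add]; simp
        _ ≤ K := hCK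
    rcases le_or_gt 0 z.re with hzre | hzre
    · exact PhragmenLindelof.quadrant_I (f := G) (hGd.diffContOnCl) (hB _)
        (fun x _ => hre x) him hzre hz
    · exact PhragmenLindelof.quadrant_II (f := G) (hGd.diffContOnCl) (hB _)
        (fun x _ => hre x) him hzre.le hz
  -- G₋ bound on lower half plane
  have lower : ∀ z : ℂ, z.im ≤ 0 →
      ‖F z * Complex.exp (-(Real.pi * I) * z)‖ ≤ K := by
    intro z hz
    set G : ℂ → ℂ := fun w => F w * Complex.exp (-(Real.pi * I) * w) with hG
    have hGd : Differentiable ℂ G := hd.mul (by fun_prop)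
    have hB : ∀ (s : Set ℂ), ∃ c < (2:ℝ), ∃ B, G =O[Bornology.cobounded ℂ ⊓ Filter.principal s]
        fun z => Real.exp (B * ‖z‖ ^ c) := by
      intro s
      refine ⟨1, one_lt_two, 2 * Real.pi, ?_⟩
      refine Asymptotics.IsBigO.of_bound (max Ce 1) ?_
      filter_upwards with w
      show ‖F w * Complex.exp (-(Real.pi * I) * w)‖ ≤ _
      rw [norm_mul]
      have h1 : ‖Complex.exp (-(Real.pi * I) * w)‖ ≤
          Real.exp (Real.pi * ‖w‖) := by
        rw [Complex.norm_exp]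
        refine Real.exp_le_exp.2 ?_
        have : (-(Real.pi * I) * w).re = Real.pi * w.im := by simp
        rw [this]
        nlinarith [Complex.abs_im_le_norm w, Real.pi_nonneg, le_abs_self w.im]
      have h2 := hty w
      have hexp : Real.exp (2 * Real.pi * ‖w‖ ^ (1:ℝ)) =
          Real.exp (Real.pi * ‖w‖) * Real.exp (Real.pi * ‖w‖) := by
        rw [← Real.exp_add, Real.rpow_one]; ring_nf
      have habs : |Real.exp (2 * Real.pi * ‖w‖ ^ (1:ℝ))| =
          Real.exp (2 * Real.pi * ‖w‖ ^ (1:ℝ)) := abs_of_pos (Real.exp_pos _)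
      rw [Real.norm_eq_abs, habs, hexp]
      have hCe1 : Ce ≤ max Ce 1 := le_max_left _ _
      have e1 : (0:ℝ) < Real.exp (Real.pi * ‖w‖) := Real.exp_pos _
      nlinarith [norm_nonneg (F w),
        norm_nonneg (Complex.exp (-(Real.pi * I) * w)),
        mul_le_mul h2 h1 (norm_nonneg _) (le_trans (norm_nonneg _) h2)]
    have hre : ∀ x : ℝ, ‖G x‖ ≤ K := by
      intro x
      rw [hG]; simp only
      rw [norm_mul, Complex.norm_exp]
      have : (-(↑Real.pi * I) * ↑x).re = 0 := by simp
      rw [this, Real.exp_zero, mul_one]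
      exact le_trans (hM x) hMK
    have him : ∀ x : ℝ, x ≤ 0 → ‖G (x * I)‖ ≤ K := by
      intro x hx
      rw [hG]; simp only
      rw [norm_mul, Complex.norm_exp]
      have hre' : (-(↑Real.pi * I) * (↑x * I)).re = Real.pi * x := by simp
      rw [hre']
      have h2 := hty (x * I)
      have habs : ‖(x:ℂ) * I‖ = -x := by
        rw [norm_mul, Complex.norm_I, mul_one, Complex.norm_real, Real.norm_eq_abs, abs_of_nonpos hx]
      rw [habs] at h2
      calc ‖F (↑x * I)‖ * Real.exp (Real.pi * x)
          ≤ (Ce * Real.exp (Real.pi * -x)) * Real.exp (Real.pi * x) := by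
            have := Real.exp_pos (Real.pi * x); nlinarith [norm_nonneg (F ((x:ℂ) * I))]
        _ = Ce := by rw [mul_assoc, ← Real.exp_add]; simp
        _ ≤ K := hCK
    rcases le_or_gt 0 z.re with hzre | hzre
    · exact PhragmenLindelof.quadrant_IV (f := G) (hGd.diffContOnCl) (hB _)
        (fun x _ => hre x) him hzre hz
    · exact PhragmenLindelof.quadrant_III (f := G) (hGd.diffContOnCl) (hB _)
        (fun x _ => hre x) him hzre.le hz
  intro z
  rcases le_or_gt 0 z.im with hz | hz
  · have h := upper z hz
    have hexp : ‖Complex.exp (Real.pi * I * z)‖ = Real.exp (-(Real.pi * z.im)) := by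
      rw [Complex.norm_exp]; congr 1; simp
    rw [norm_mul, hexp] at h
    have habs : |z.im| = z.im := _root_.abs_of_nonneg hz
    rw [habs]
    have e1 : (0:ℝ) < Real.exp (-(Real.pi * z.im)) := Real.exp_pos _
    have e2 : Real.exp (-(Real.pi * z.im)) * Real.exp (Real.pi * z.im) = 1 := by
      rw [← Real.exp_add]; simp
    nlinarith [Real.exp_pos (Real.pi * z.im), norm_nonneg (F z)]
  · have h := lower z hz.le
    have hexp : ‖Complex.exp (-(Real.pi * I) * z)‖ = Real.exp (Real.pi * z.im) := by
      rw [Complex.norm_exp]; congr 1; simp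
    rw [norm_mul, hexp] at h
    have habs : |z.im| = -z.im := abs_of_neg hz
    rw [habs]
    have e2 : Real.exp (Real.pi * z.im) * Real.exp (Real.pi * -z.im) = 1 := by
      rw [← Real.exp_add]; simp
    nlinarith [Real.exp_pos (Real.pi * z.im), Real.exp_pos (Real.pi * -z.im),
      norm_nonneg (F z)]

/-- The translated sinc² test function is in `B¹_π` with the strip bound. -/
lemma testfun_strip (a : ℝ) (z : ℂ) :
    ‖sinc2 ((Real.pi / 2 : ℝ) * (z - a))‖ ≤ Real.exp (Real.pi * |z.im|) := by
  refine (sinc2_bound _).trans (le_of_eq ?_)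
  congr 1
  have him : (((Real.pi / 2 : ℝ) : ℂ) * (z - a)).im = Real.pi / 2 * z.im := by
    simp
  rw [him, abs_mul, _root_.abs_of_nonneg (by positivity : (0:ℝ) ≤ Real.pi / 2)]
  ring

lemma testfun_memB1 (a : ℝ) :
    MemB1 Real.pi (fun z => sinc2 ((Real.pi / 2 : ℝ) * (z - a))) ∧
    Differentiable ℂ (fun z => sinc2 ((Real.pi / 2 : ℝ) * (z - a))) := by
  have hdiff : Differentiable ℂ (fun z => sinc2 ((Real.pi / 2 : ℝ) * (z - a))) := by
    exact sinc2_diff.comp ((differentiable_id.sub_const _).const_mul _)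
  refine ⟨⟨hdiff, ⟨1, fun z => ?_⟩, ⟨Real.exp Real.pi, fun x => ?_⟩⟩, hdiff⟩
  · rw [one_mul]
    refine (testfun_strip a z).trans (Real.exp_le_exp.2 ?_)
    have := Complex.abs_im_le_norm z
    nlinarith [Real.pi_nonneg, abs_nonneg z.im]
  · have := deriv_bound_of_strip hdiff (K := 1)
      (fun z => by rw [one_mul]; exact testfun_strip a z) x
    simpa using this

set_option maxHeartbeats 1000000 in
/-- Core argument: gaps of a sampling sequence are bounded. -/
lemma gap_bound (lam : ℤ → ℝ) {α C₀ : ℝ} (hα : 0 < α)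
    (hstep : ∀ k : ℤ, α ≤ lam (k + 1) - lam k)
    (hord : ∀ j k : ℤ, j ≤ k → lam j ≤ lam k)
    (hs : ∀ F : ℂ → ℂ, MemB1 Real.pi F → ∀ B : ℝ,
      (∀ k : ℤ, ‖(F (lam (k + 1)) - F (lam k)) /
          ((lam (k + 1) : ℂ) - (lam k : ℂ))‖ ≤ B) →
      ∀ x : ℝ, ‖deriv F x‖ ≤ C₀ * B)
    (k : ℤ) : lam (k + 1) - lam k ≤ max 2 (4 * C₀ / α) := by
  by_contra hcon
  push_neg at hcon
  set L : ℝ := lam (k + 1) - lam k with hL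
  have hL2 : 2 < L := lt_of_le_of_lt (le_max_left _ _) hcon
  have hL4 : 4 * C₀ / α < L := lt_of_le_of_lt (le_max_right _ _) hcon
  have hL0 : 0 < L := by linarith
  set a : ℝ := (lam k + lam (k + 1)) / 2 with ha
  set G : ℂ → ℂ := fun z => sinc2 ((Real.pi / 2 : ℝ) * (z - a)) with hG
  obtain ⟨hmem, hdiff⟩ := testfun_memB1 a
  -- distance of lattice points from `a`
  have haL : a = lam k + L / 2 := by rw [ha, hL]; ring
  have hdist : ∀ j : ℤ, L / 2 ≤ |lam j - a| := by
    intro j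
    rcases le_or_gt j k with hj | hj
    · have h := hord j k hj
      have h2 : lam j - a ≤ -(L / 2) := by rw [haL]; linarith
      calc L / 2 ≤ -(lam j - a) := by linarith
        _ ≤ |lam j - a| := neg_le_abs _
    · have h := hord (k + 1) j hj
      have h2 : L / 2 ≤ lam j - a := by rw [haL]; linarith
      exact h2.trans (le_abs_self _)
  -- values at lattice points
  have hval : ∀ j : ℤ, ‖G (lam j)‖ ≤ 2 / L ^ 2 := by
    intro j
    have hd := hdist j
    have hGj : G (lam j) = sinc2 ((Real.pi / 2 * (lam j - a) : ℝ) : ℂ) := by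
      rw [hG]; simp only; push_cast; ring_nf
    set d : ℝ := lam j - a with hdd
    have habs : d ^ 2 = |d| ^ 2 := (_root_.sq_abs d).symm
    have hx : 1 ≤ |Real.pi / 2 * d| := by
      rw [abs_mul, _root_.abs_of_nonneg (by positivity : (0:ℝ) ≤ Real.pi / 2)]
      have h1d : 1 ≤ |d| := by linarith
      have hh : (1:ℝ) * 1 ≤ Real.pi / 2 * |d| :=
        mul_le_mul (by nlinarith [Real.pi_gt_three]) h1d zero_le_one (by positivity)
      linarith
    rw [hGj]
    refine (sinc2_real_decay _ hx).trans ?_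
    have h1 : (L / 2) ^ 2 ≤ d ^ 2 := by rw [habs]; nlinarith [abs_nonneg d]
    have h3 : (9:ℝ) / 4 ≤ (Real.pi / 2) ^ 2 := by nlinarith [Real.pi_gt_three]
    have hsq : L ^ 2 / 2 ≤ (Real.pi / 2 * d) ^ 2 := by
      have hmm := mul_le_mul h3 h1 (by positivity) (by positivity)
      nlinarith
    have hpos : (0:ℝ) < (Real.pi / 2 * d) ^ 2 := by nlinarith
    rw [div_le_div_iff₀ hpos (by positivity)]
    nlinarith
  -- divided differences
  have hdd : ∀ j : ℤ, ‖(G (lam (j + 1)) - G (lam j)) /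
      ((lam (j + 1) : ℂ) - (lam j : ℂ))‖ ≤ 4 / (α * L ^ 2) := by
    intro j
    rw [norm_div]
    have hden : α ≤ ‖(lam (j + 1) : ℂ) - (lam j : ℂ)‖ := by
      rw [show ((lam (j + 1) : ℂ) - (lam j : ℂ)) = ((lam (j + 1) - lam j : ℝ) : ℂ) by push_cast; ring]
      rw [Complex.norm_real, Real.norm_eq_abs]
      exact (hstep j).trans (le_abs_self _)
    have hnum : ‖G (lam (j + 1)) - G (lam j)‖ ≤ 4 / L ^ 2 := by
      refine (norm_sub_le _ _).trans ?_
      have := hval (j + 1); have := hval j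
      have : (4:ℝ) / L ^ 2 = 2 / L ^ 2 + 2 / L ^ 2 := by ring
      rw [this]
      exact add_le_add (hval (j + 1)) (hval j)
    have h4 : (4:ℝ) / (α * L ^ 2) = (4 / L ^ 2) / α := by
      rw [div_div]; ring_nf
    rw [h4]
    exact div_le_div₀ (by positivity) hnum hα hden
  have hderiv := hs G hmem (4 / (α * L ^ 2)) hdd
  -- MVT from lam k to a
  have hak : a - lam k = L / 2 := by rw [ha, hL]; ring
  have hka : lam k ≤ a := by linarith
  have hmvt := mvt_real hdiff hderiv (lam k) a hka
  have hGa : G (a : ℝ) = 1 := by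
    rw [hG]; simp only
    rw [show ((Real.pi / 2 : ℝ) : ℂ) * ((a : ℂ) - (a : ℂ)) = 0 by ring]
    exact sinc2_zero
  have h1 : (1:ℝ) ≤ C₀ * (4 / (α * L ^ 2)) * (L / 2) + 2 / L ^ 2 := by
    have e1 : ‖G a‖ = 1 := by rw [hGa]; simp
    have e2 : ‖G a‖ ≤ ‖G a - G (lam k)‖ + ‖G (lam k)‖ := by
      calc ‖G a‖ = ‖(G a - G (lam k)) + G (lam k)‖ := by ring_nf
        _ ≤ _ := norm_add_le _ _
    have := hval k
    rw [e1] at e2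
    rw [hak] at hmvt
    linarith
  have e3 : C₀ * (4 / (α * L ^ 2)) * (L / 2) = 2 * C₀ / (α * L) := by
    field_simp; ring
  rw [e3] at h1
  have h2 : (2:ℝ) / L ^ 2 ≤ 1 / 2 := by
    rw [div_le_div_iff₀ (by positivity) (by norm_num)]
    nlinarith
  have h3 : 1 / 2 ≤ 2 * C₀ / (α * L) := by linarith
  have hαL : 0 < α * L := by positivity
  rw [le_div_iff₀ hαL] at h3
  rw [div_lt_iff₀ hα] at hL4
  nlinarith

lemma lam_growth (lam : ℤ → ℝ) {α : ℝ}
    (hstep : ∀ k : ℤ, α ≤ lam (k + 1) - lam k) :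
    ∀ m n : ℤ, m ≤ n → α * (n - m) ≤ lam n - lam m := by
  intro m
  refine Int.le_induction ?_ ?_
  · simp
  · intro n hn ih
    push_cast
    push_cast at ih
    nlinarith [hstep n]

lemma lam_bracket (lam : ℤ → ℝ) {α : ℝ} (hα : 0 < α)
    (hstep : ∀ k : ℤ, α ≤ lam (k + 1) - lam k) (x : ℝ) :
    ∃ k : ℤ, lam k ≤ x ∧ x ≤ lam (k + 1) := by
  have growth := lam_growth lam hstep
  -- nonempty
  obtain ⟨n₀, hn₀⟩ : ∃ n : ℤ, lam n ≤ x := by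
    obtain ⟨n, hn⟩ := exists_int_lt ((x - lam 0) / α)
    refine ⟨min n 0, ?_⟩
    have h1 : min n 0 ≤ 0 := min_le_right _ _
    have h2 := growth (min n 0) 0 h1
    have h3 : (min n 0 : ℝ) ≤ n := by exact_mod_cast min_le_left n 0
    have h4 : (n:ℝ) < (x - lam 0) / α := hn
    have h5 : (min n 0 : ℝ) < (x - lam 0) / α := lt_of_le_of_lt h3 h4
    rw [lt_div_iff₀ hα] at h5
    push_cast at h2
    nlinarith
  -- bounded above
  obtain ⟨b, hb⟩ : ∃ b : ℤ, ∀ z : ℤ, lam z ≤ x → z ≤ b := by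
    obtain ⟨n, hn⟩ := exists_int_gt ((x - lam 0) / α)
    refine ⟨max n 0, fun z hz => ?_⟩
    by_contra hzb
    push_neg at hzb
    have h0 : (0:ℤ) ≤ z := le_trans (le_max_right n 0) hzb.le
    have h2 := growth 0 z h0
    have h3 : (n:ℝ) ≤ z := by exact_mod_cast le_trans (le_max_left n 0) hzb.le
    have h4 : (x - lam 0) / α < (z:ℝ) := lt_of_lt_of_le hn h3
    rw [div_lt_iff₀ hα] at h4
    push_cast at h2
    nlinarith
  obtain ⟨k, hk, hkmax⟩ := Int.exists_greatest_of_bdd ⟨b, hb⟩ ⟨n₀, hn₀⟩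
  refine ⟨k, hk, ?_⟩
  by_contra hx
  push_neg at hx
  exact absurd (hkmax (k + 1) hx.le) (by omega)

/-- a separated sampling sequence for `B¹_π` is sampling
for the Bernstein space `B_π`. -/
theorem stmt_5 (lam : ℤ → ℝ) (hmono : StrictMono lam)
    (hsep : ∃ α > 0, ∀ j k : ℤ, j ≠ k → α ≤ |lam j - lam k|)
    (hsamp : ∃ C : ℝ, ∀ F : ℂ → ℂ, MemB1 Real.pi F → ∀ B : ℝ,
      (∀ k : ℤ, ‖(F (lam (k + 1)) - F (lam k)) /
          ((lam (k + 1) : ℂ) - (lam k : ℂ))‖ ≤ B) →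
      ∀ x : ℝ, ‖deriv F x‖ ≤ C * B) :
    ∃ C : ℝ, ∀ F : ℂ → ℂ, MemB Real.pi F →
      (∀ k : ℤ, ‖F (lam k)‖ ≤ 1) →
      ∀ x : ℝ, ‖F x‖ ≤ C := by
  obtain ⟨α, hα, hsep'⟩ := hsep
  obtain ⟨C₀, hs⟩ := hsamp
  have hstep : ∀ k : ℤ, α ≤ lam (k + 1) - lam k := by
    intro k
    have h1 := hsep' (k + 1) k (by omega)
    have hlt : lam k < lam (k + 1) := hmono (by omega)
    rwa [_root_.abs_of_pos (by linarith : (0:ℝ) < lam (k + 1) - lam k)] at h1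
  have hord : ∀ j k : ℤ, j ≤ k → lam j ≤ lam k := fun j k h => hmono.monotone h
  set L₀ : ℝ := max 2 (4 * C₀ / α) with hL₀
  have hgap := gap_bound lam hα hstep hord hs
  refine ⟨1 + C₀ * (2 / α) * L₀, ?_⟩
  intro F hF hFk x
  obtain ⟨hFd, ⟨Ce, hCe⟩, ⟨M, hM⟩⟩ := hF
  have hstrip := strip_bound hFd hCe hM
  have hderivb : ∀ y : ℝ, ‖deriv F y‖ ≤ max M Ce * Real.exp Real.pi :=
    fun y => deriv_bound_of_strip hFd hstrip y
  have hmem : MemB1 Real.pi F := ⟨hFd, ⟨Ce, hCe⟩, ⟨_, hderivb⟩⟩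
  have hdd : ∀ k : ℤ, ‖(F (lam (k + 1)) - F (lam k)) /
      ((lam (k + 1) : ℂ) - (lam k : ℂ))‖ ≤ 2 / α := by
    intro k
    rw [norm_div]
    have hden : α ≤ ‖(lam (k + 1) : ℂ) - (lam k : ℂ)‖ := by
      rw [show ((lam (k + 1) : ℂ) - (lam k : ℂ)) = ((lam (k + 1) - lam k : ℝ) : ℂ) by
        push_cast; ring]
      rw [Complex.norm_real, Real.norm_eq_abs]
      exact (hstep k).trans (le_abs_self _)
    have hnum : ‖F (lam (k + 1)) - F (lam k)‖ ≤ 2 := by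
      refine (norm_sub_le _ _).trans ?_
      have := hFk (k + 1); have := hFk k
      linarith
    exact div_le_div₀ (by norm_num) hnum hα hden
  have hder := hs F hmem (2 / α) hdd
  have hm0 : 0 ≤ C₀ * (2 / α) := le_trans (norm_nonneg _) (hder 0)
  obtain ⟨k, hk1, hk2⟩ := lam_bracket lam hα hstep x
  have hgapk := hgap k
  have hmvt := mvt_real hFd hder (lam k) x hk1
  have hxk : x - lam k ≤ L₀ := by rw [hL₀]; rw [← hL₀]; linarith
  calc ‖F x‖
      = ‖(F x - F (lam k)) + F (lam k)‖ := by ring_nf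
    _ ≤ ‖F x - F (lam k)‖ + ‖F (lam k)‖ := norm_add_le _ _
    _ ≤ C₀ * (2 / α) * (x - lam k) + 1 := add_le_add hmvt (hFk k)
    _ ≤ 1 + C₀ * (2 / α) * L₀ := by
        have := mul_le_mul_of_nonneg_left hxk hm0
        linarith
end
end

section
/- Let f ∈ B¹_π \ B_π (entire of exponential type π, f' bounded on ℝ, but f unbounded on ℝ), and let A > 0. Let Z_A(f) be the set of zeros of f in the strip {z : |Im z| < A}. Then the lower Beurling density of Z_A(f) is zero: lim_{R→∞} inf_{x∈ℝ} #(Z_A(f) ∩ {z : x < Re z < x+R}) / R = 0. -/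
open Complex

noncomputable section

/-- The zeros of `f` in the horizontal strip `|Im z| < A` whose real part lies
in the window `(x, x + R)`. -/
def stripZeros (f : ℂ → ℂ) (A x R : ℝ) : Set ℂ :=
  {z : ℂ | f z = 0 ∧ |z.im| < A ∧ x < z.re ∧ z.re < x + R}

/-- if `f ∈ B¹_π` is unbounded on `ℝ`, then for every `A > 0`
the zero set of `f` in the strip `|Im z| < A` has lower Beurling density `0`. -/
theorem stmt_14 (f : ℂ → ℂ) (hf : MemB1 Real.pi f)
    (hunb : ¬ ∃ M : ℝ, ∀ x : ℝ, ‖f x‖ ≤ M) (A : ℝ) (hA : 0 < A) :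
    ∀ d > 0, ∃ R₀ > 0, ∀ R ≥ R₀, ∃ x : ℝ,
      (stripZeros f A x R).Finite ∧
      (Nat.card (stripZeros f A x R) : ℝ) ≤ d * R := by
  obtain ⟨hdiff, ⟨C, hC⟩, M, hM⟩ := hf
  have hπ : (0:ℝ) < Real.pi := Real.pi_pos
  have hderiv : Differentiable ℂ (deriv f) :=
    (contDiff_infty_iff_deriv.mp hdiff.contDiff).2.differentiable (by simp)
  have hM0 : (0:ℝ) ≤ M := le_trans (norm_nonneg _) (hM 0)
  have hC0 : (0:ℝ) ≤ C := by
    have h := hC 0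
    simp only [norm_zero, mul_zero, Real.exp_zero, mul_one] at h
    exact le_trans (norm_nonneg _) h
  set C' : ℝ := C * Real.exp Real.pi with hC'def
  have hC'0 : (0:ℝ) ≤ C' := mul_nonneg hC0 (Real.exp_pos _).le
  -- Cauchy estimate: the derivative has exponential type π as well
  have hDC : ∀ z : ℂ, ‖deriv f z‖ ≤ C' * Real.exp (Real.pi * ‖z‖) := by
    intro z
    have h1 : ‖deriv f z‖ ≤ (C * Real.exp (Real.pi * (‖z‖ + 1))) / 1 := by
      refine Complex.norm_deriv_le_of_forall_mem_sphere_norm_le one_pos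
        hdiff.diffContOnCl fun w hw => ?_
      have hw1 : ‖w - z‖ = 1 := by
        simpa [Complex.dist_eq] using (Metric.mem_sphere.mp hw)
      have habs : ‖w‖ ≤ ‖z‖ + 1 := by
        calc ‖w‖ = ‖z + (w - z)‖ := by ring_nf
          _ ≤ ‖z‖ + ‖w - z‖ := norm_add_le _ _
          _ = ‖z‖ + 1 := by rw [hw1]
      calc ‖f w‖ ≤ C * Real.exp (Real.pi * ‖w‖) := hC w
        _ ≤ C * Real.exp (Real.pi * (‖z‖ + 1)) := by
            gcongr
    have : (C * Real.exp (Real.pi * (‖z‖ + 1))) / 1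
        = C' * Real.exp (Real.pi * ‖z‖) := by
      rw [div_one, hC'def, mul_add, mul_one, Real.exp_add]; ring
    rw [← this]
    exact h1
  -- Phragmén–Lindelöf: bound the derivative on horizontal strips
  set τ : ℝ := Real.pi + 1 with hτdef
  have hτ0 : (0:ℝ) < τ := by positivity
  set F : ℂ → ℂ := fun z => deriv f z * Complex.exp (Complex.I * (τ:ℂ) * z) with hFdef
  set G : ℂ → ℂ := fun z => deriv f z * Complex.exp (-(Complex.I * (τ:ℂ) * z)) with hGdef
  have hFabs : ∀ z : ℂ, ‖F z‖
      = ‖deriv f z‖ * Real.exp (-(τ * z.im)) := by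
    intro z
    have : (Complex.I * (τ:ℂ) * z).re = -(τ * z.im) := by
      simp [Complex.mul_re, Complex.mul_im]
    rw [hFdef]
    simp only [norm_mul, Complex.norm_exp, this]
  have hGabs : ∀ z : ℂ, ‖G z‖
      = ‖deriv f z‖ * Real.exp (τ * z.im) := by
    intro z
    have : (-(Complex.I * (τ:ℂ) * z)).re = τ * z.im := by
      simp [Complex.mul_re, Complex.mul_im]
    rw [hGdef]
    simp only [norm_mul, Complex.norm_exp, this]
  have hFdiff : Differentiable ℂ F :=
    hderiv.mul (((differentiable_const _).mul differentiable_id).cexp)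
  have hGdiff : Differentiable ℂ G :=
    hderiv.mul ((((differentiable_const _).mul differentiable_id).neg).cexp)
  set C₁ : ℝ := max M C' with hC₁def
  have hC₁0 : (0:ℝ) ≤ C₁ := le_trans hM0 (le_max_left _ _)
  -- growth estimates for F and G on half planes
  have hFgrow : ∀ z : ℂ, 0 ≤ z.im →
      ‖F z‖ ≤ C' * Real.exp (Real.pi * ‖z‖) := by
    intro z hz
    rw [hFabs]
    calc ‖deriv f z‖ * Real.exp (-(τ * z.im))
        ≤ (C' * Real.exp (Real.pi * ‖z‖)) * 1 := by
          apply mul_le_mul (hDC z) _ (Real.exp_pos _).le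
            (by positivity)
          rw [Real.exp_le_one_iff]
          nlinarith
      _ = C' * Real.exp (Real.pi * ‖z‖) := mul_one _
  have hGgrow : ∀ z : ℂ, z.im ≤ 0 →
      ‖G z‖ ≤ C' * Real.exp (Real.pi * ‖z‖) := by
    intro z hz
    rw [hGabs]
    calc ‖deriv f z‖ * Real.exp (τ * z.im)
        ≤ (C' * Real.exp (Real.pi * ‖z‖)) * 1 := by
          apply mul_le_mul (hDC z) _ (Real.exp_pos _).le (by positivity)
          rw [Real.exp_le_one_iff]
          nlinarith
      _ = C' * Real.exp (Real.pi * ‖z‖) := mul_one _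
  -- boundary estimates
  have hFre : ∀ x : ℝ, ‖F (x:ℂ)‖ ≤ C₁ := by
    intro x
    rw [hFabs]
    simp only [Complex.ofReal_im, mul_zero, neg_zero, Real.exp_zero, mul_one]
    exact le_trans (hM x) (le_max_left _ _)
  have hGre : ∀ x : ℝ, ‖G (x:ℂ)‖ ≤ C₁ := by
    intro x
    rw [hGabs]
    simp only [Complex.ofReal_im, mul_zero, Real.exp_zero, mul_one]
    exact le_trans (hM x) (le_max_left _ _)
  have hFim : ∀ x : ℝ, 0 ≤ x → ‖F ((x:ℂ) * Complex.I)‖ ≤ C₁ := by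
    intro x hx
    rw [hFabs]
    have h1 : ((x:ℂ) * Complex.I).im = x := by simp
    have h2 : ‖(x:ℂ) * Complex.I‖ = x := by
      rw [norm_mul, Complex.norm_I, mul_one, Complex.norm_real, Real.norm_eq_abs, _root_.abs_of_nonneg hx]
    rw [h1]
    calc ‖deriv f ((x:ℂ) * Complex.I)‖ * Real.exp (-(τ * x))
        ≤ (C' * Real.exp (Real.pi * x)) * Real.exp (-(τ * x)) := by
          gcongr
          exact hDC _ |>.trans (by rw [h2])
      _ = C' * Real.exp (Real.pi * x - τ * x) := by rw [mul_assoc, ← Real.exp_add]; ring_nf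
      _ ≤ C' * 1 := by
          gcongr
          rw [Real.exp_le_one_iff, hτdef]
          nlinarith
      _ ≤ C₁ := by rw [mul_one]; exact le_max_right _ _
  have hGim : ∀ x : ℝ, x ≤ 0 → ‖G ((x:ℂ) * Complex.I)‖ ≤ C₁ := by
    intro x hx
    rw [hGabs]
    have h1 : ((x:ℂ) * Complex.I).im = x := by simp
    have h2 : ‖(x:ℂ) * Complex.I‖ = -x := by
      rw [norm_mul, Complex.norm_I, mul_one, Complex.norm_real, Real.norm_eq_abs, _root_.abs_of_nonpos hx]
    rw [h1]
    calc ‖deriv f ((x:ℂ) * Complex.I)‖ * Real.exp (τ * x)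
        ≤ (C' * Real.exp (Real.pi * (-x))) * Real.exp (τ * x) := by
          gcongr
          exact hDC _ |>.trans (by rw [h2])
      _ = C' * Real.exp (Real.pi * (-x) + τ * x) := by rw [mul_assoc, ← Real.exp_add]
      _ ≤ C' * 1 := by
          gcongr
          rw [Real.exp_le_one_iff, hτdef]
          nlinarith
      _ ≤ C₁ := by rw [mul_one]; exact le_max_right _ _
  -- big-O hypotheses for PL
  have hBigO : ∀ (S : Set ℂ), (∀ z ∈ S, 0 ≤ z.im) → (∃ c < (2:ℝ), ∃ B,
      F =O[Bornology.cobounded ℂ ⊓ Filter.principal S]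
        fun z => Real.exp (B * ‖z‖ ^ c)) := by
    intro S hS
    refine ⟨1, one_lt_two, Real.pi, Asymptotics.IsBigO.of_bound C' ?_⟩
    rw [Filter.eventually_inf_principal]
    filter_upwards with z hz
    rw [Real.norm_of_nonneg (Real.exp_pos _).le, Real.rpow_one]
    exact hFgrow z (hS z hz)
  have hBigOG : ∀ (S : Set ℂ), (∀ z ∈ S, z.im ≤ 0) → (∃ c < (2:ℝ), ∃ B,
      G =O[Bornology.cobounded ℂ ⊓ Filter.principal S]
        fun z => Real.exp (B * ‖z‖ ^ c)) := by
    intro S hS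
    refine ⟨1, one_lt_two, Real.pi, Asymptotics.IsBigO.of_bound C' ?_⟩
    rw [Filter.eventually_inf_principal]
    filter_upwards with z hz
    rw [Real.norm_of_nonneg (Real.exp_pos _).le, Real.rpow_one]
    exact hGgrow z (hS z hz)
  -- PL conclusion on the closed upper/lower half planes
  have hupper : ∀ z : ℂ, 0 ≤ z.im → ‖F z‖ ≤ C₁ := by
    intro z hz
    rcases le_or_gt 0 z.re with hre | hre
    · refine PhragmenLindelof.quadrant_I hFdiff.diffContOnCl
        (hBigO _ fun w hw => ?_) (fun x hx => hFre x) hFim hre hz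
      exact le_of_lt (Complex.mem_reProdIm.mp hw).2
    · refine PhragmenLindelof.quadrant_II hFdiff.diffContOnCl
        (hBigO _ fun w hw => ?_) (fun x hx => hFre x) hFim hre.le hz
      exact le_of_lt (Complex.mem_reProdIm.mp hw).2
  have hlower : ∀ z : ℂ, z.im ≤ 0 → ‖G z‖ ≤ C₁ := by
    intro z hz
    rcases le_or_gt 0 z.re with hre | hre
    · refine PhragmenLindelof.quadrant_IV hGdiff.diffContOnCl
        (hBigOG _ fun w hw => ?_) (fun x hx => hGre x) hGim hre hz
      exact le_of_lt (Complex.mem_reProdIm.mp hw).2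
    · refine PhragmenLindelof.quadrant_III hGdiff.diffContOnCl
        (hBigOG _ fun w hw => ?_) (fun x hx => hGre x) hGim hre.le hz
      exact le_of_lt (Complex.mem_reProdIm.mp hw).2
  -- bound on the derivative in the strip
  set K : ℝ := C₁ * Real.exp (τ * A) with hKdef
  have hK0 : (0:ℝ) ≤ K := by positivity
  have hK : ∀ z : ℂ, |z.im| ≤ A → ‖deriv f z‖ ≤ K := by
    intro z hz
    rw [abs_le] at hz
    rcases le_or_gt 0 z.im with him | him
    · have h1 := hupper z him
      rw [hFabs] at h1
      have h2 : ‖deriv f z‖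
          = (‖deriv f z‖ * Real.exp (-(τ * z.im))) * Real.exp (τ * z.im) := by
        rw [mul_assoc, ← Real.exp_add]; simp
      rw [h2]
      calc (‖deriv f z‖ * Real.exp (-(τ * z.im))) * Real.exp (τ * z.im)
          ≤ C₁ * Real.exp (τ * A) := by
            apply mul_le_mul h1 _ (Real.exp_pos _).le hC₁0
            rw [Real.exp_le_exp]
            nlinarith [hz.1, hz.2]
      _ = K := rfl
    · have h1 := hlower z him.le
      rw [hGabs] at h1
      have h2 : ‖deriv f z‖
          = (‖deriv f z‖ * Real.exp (τ * z.im)) * Real.exp (-(τ * z.im)) := by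
        rw [mul_assoc, ← Real.exp_add]; simp
      rw [h2]
      calc (‖deriv f z‖ * Real.exp (τ * z.im)) * Real.exp (-(τ * z.im))
          ≤ C₁ * Real.exp (τ * A) := by
            apply mul_le_mul h1 _ (Real.exp_pos _).le hC₁0
            rw [Real.exp_le_exp]
            nlinarith
      _ = K := rfl
  -- Lipschitz estimate for f on the closed strip
  set S : Set ℂ := {z : ℂ | |z.im| ≤ A} with hSdef
  have hSconv : Convex ℝ S := by
    have : S = {z : ℂ | -A ≤ z.im} ∩ {z : ℂ | z.im ≤ A} := by
      ext z; simp [hSdef, abs_le, and_comm]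
    rw [this]
    exact (convex_halfSpace_im_ge (-A)).inter (convex_halfSpace_im_le A)
  have hlip : ∀ z ∈ S, ∀ w ∈ S, ‖f w - f z‖ ≤ K * ‖w - z‖ := by
    intro z hz w hw
    have := hSconv.norm_image_sub_le_of_norm_deriv_le (f := f)
      (fun x _ => hdiff.differentiableAt)
      (fun x hx => by simpa using hK x hx) hz hw
    simpa using this
  -- conclusion
  push_neg at hunb
  intro d hd
  refine ⟨1, one_pos, fun R hR => ?_⟩
  obtain ⟨x₀, hx₀⟩ := hunb (K * (R + A))
  have hempty : stripZeros f A (x₀ - R/2) R = ∅ := by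
    ext z
    simp only [stripZeros, Set.mem_setOf_eq, Set.mem_empty_iff_false, iff_false]
    rintro ⟨hz0, hzim, hz1, hz2⟩
    have hzS : z ∈ S := le_of_lt hzim
    have hx₀S : (x₀:ℂ) ∈ S := by
      simp only [hSdef, Set.mem_setOf_eq, Complex.ofReal_im, abs_zero]
      exact hA.le
    have hd1 : ‖(x₀:ℂ) - z‖ ≤ R + A := by
      have h1 : ‖(x₀:ℂ) - z‖ ≤ |((x₀:ℂ) - z).re| + |((x₀:ℂ) - z).im| :=
        Complex.norm_le_abs_re_add_abs_im _
      have h2 : ((x₀:ℂ) - z).re = x₀ - z.re := by simp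
      have h3 : ((x₀:ℂ) - z).im = -z.im := by simp
      rw [h2, h3, abs_neg] at h1
      have h4 : |x₀ - z.re| ≤ R := by
        rw [abs_le]
        constructor <;> [linarith; linarith]
      have h5 : |z.im| ≤ A := hzS
      linarith
    have hlz := hlip z hzS (x₀:ℂ) hx₀S
    rw [hz0, sub_zero] at hlz
    have hfin : ‖f (x₀:ℂ)‖ ≤ K * (R + A) :=
      hlz.trans (by gcongr)
    exact absurd hfin (not_le.mpr hx₀)
  refine ⟨x₀ - R/2, by rw [hempty]; exact Set.finite_empty, ?_⟩
  rw [hempty]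
  have h0 : Nat.card ((∅ : Set ℂ)) = 0 := by simp
  rw [h0]
  have hR0 : (0:ℝ) < R := lt_of_lt_of_le one_pos hR
  push_cast
  nlinarith
end
end
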